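/- arXiv:2603.09441 — 2 statements merged into one kernel-verified Lean document; each statement's English description precedes it below -/
import Mathlib

section
/- Let R be an F-finite Noetherian F_p-algebra (i.e., the Frobenius endomorphism F: R → R, r ↦ r^p, is a finite ring map). Then the power series ring R[[z]] is also F-finite. -/
instance powerSeries_charP (R : Type*) [CommRing R] (p : ℕ) [CharP R p] :
    CharP (PowerSeries R) p :=
  charP_of_injective_ringHom (f := PowerSeries.C (R := R))
    (fun _ _ h => by
      simpa using congrArg (PowerSeries.constantCoeff (R := R)) h) p

lemma coeff_pow_char (p : ℕ) [Fact p.Prime] (R : Type*) [CommRing R] [CharP R p]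
    (f : PowerSeries R) (m : ℕ) :
    PowerSeries.coeff m (f ^ p) = (if p ∣ m then PowerSeries.coeff (m / p) f else 0) ^ p := by
  have hp : 0 < p := (Fact.out : p.Prime).pos
  set P := f.trunc (m + 1) with hP
  have hdvd : (PowerSeries.X : PowerSeries R) ^ (m + 1) ∣ f - ↑P := by
    rw [PowerSeries.X_pow_dvd_iff]
    intro i hi
    simp [hP, Polynomial.coeff_coe, PowerSeries.coeff_trunc, hi]
  obtain ⟨g, hg⟩ := hdvd
  have hf : f = (↑P : PowerSeries R) + PowerSeries.X ^ (m + 1) * g := by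
    rw [← hg]; ring
  nth_rewrite 1 [hf]
  rw [add_pow_char, map_add]
  have h2 : PowerSeries.coeff m ((PowerSeries.X ^ (m + 1) * g) ^ p) = 0 := by
    have : (PowerSeries.X : PowerSeries R) ^ (m + 1) ∣ (PowerSeries.X ^ (m + 1) * g) ^ p := by
      refine dvd_trans (dvd_pow_self _ ?_) (pow_dvd_pow_of_dvd ⟨g, rfl⟩ p)
      omega
    rw [PowerSeries.X_pow_dvd_iff] at this
    exact this m (by omega)
  rw [h2, add_zero, ← Polynomial.coe_pow, Polynomial.coeff_coe,
    ← Polynomial.map_frobenius_expand (p := p), Polynomial.coeff_map, Polynomial.coeff_expand hp,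
    frobenius_def]
  congr 1
  split_ifs with h
  · simp [hP, PowerSeries.coeff_trunc, Nat.lt_succ_of_le (Nat.div_le_self m p)]
  · rfl


/-- Let `R` be an `F`-finite Noetherian `𝔽_p`-algebra (the Frobenius
`r ↦ r^p` is a finite ring map).  Then the power series ring `R[[z]]` is also `F`-finite. -/
theorem powerSeries_F_finite
    (p : ℕ) [Fact p.Prime] (R : Type*) [CommRing R] [IsNoetherianRing R] [CharP R p]
    (hF : (frobenius R p).Finite) :
    (frobenius (PowerSeries R) p).Finite := by
  classical
  have hp : 0 < p := (Fact.out : p.Prime).pos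
  -- extract generators of R over the Frobenius
  have hrep : ∃ (n : ℕ) (x : Fin n → R), ∀ a : R, ∃ c : Fin n → R,
      ∑ j, c j ^ p * x j = a := by
    letI : Algebra R R := (frobenius R p).toAlgebra
    letI : Module R R := Algebra.toModule
    haveI : Module.Finite R R := hF
    obtain ⟨n, x, hx⟩ := Module.Finite.exists_fin (R := R) (M := R)
    refine ⟨n, x, fun a => ?_⟩
    have : a ∈ Submodule.span R (Set.range x) := hx ▸ Submodule.mem_top
    obtain ⟨c, hc⟩ := (Submodule.mem_span_range_iff_exists_fun R).1 this
    refine ⟨c, ?_⟩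
    rw [← hc]
    refine Finset.sum_congr rfl fun j _ => ?_
    rw [Algebra.smul_def, RingHom.algebraMap_toAlgebra, frobenius_def]
  obtain ⟨n, x, hx⟩ := hrep
  letI : Algebra (PowerSeries R) (PowerSeries R) := (frobenius (PowerSeries R) p).toAlgebra
  letI : Module (PowerSeries R) (PowerSeries R) := Algebra.toModule
  show Module.Finite (PowerSeries R) (PowerSeries R)
  set y : Fin n × Fin p → PowerSeries R :=
    fun ji => PowerSeries.C (x ji.1) * PowerSeries.X ^ (ji.2 : ℕ) with hy
  refine ⟨⟨Finset.image y Finset.univ, ?_⟩⟩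
  rw [Finset.coe_image, Finset.coe_univ, Set.image_univ]
  rw [Submodule.eq_top_iff']
  intro g
  rw [Submodule.mem_span_range_iff_exists_fun]
  -- choose representations of each coefficient
  choose c' hc' using fun k => hx (PowerSeries.coeff k g)
  set h : Fin n → Fin p → PowerSeries R :=
    fun j i => PowerSeries.mk (fun q => c' (p * q + (i : ℕ)) j) with hh
  refine ⟨fun ji => h ji.1 ji.2, ?_⟩
  letI : SMul (PowerSeries R) (PowerSeries R) := Algebra.toSMul
  have hsmul : ∀ (a b : PowerSeries R), a • b = a ^ p * b := by
    intro a b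
    rw [Algebra.smul_def, RingHom.algebraMap_toAlgebra, frobenius_def]
  ext m
  have key : ∀ (j : Fin n) (i : Fin p),
      PowerSeries.coeff m (h j i ^ p * (PowerSeries.C (x j) * PowerSeries.X ^ (i : ℕ)))
        = if (i : ℕ) = m % p then c' m j ^ p * x j else 0 := by
    intro j i
    rw [show h j i ^ p * (PowerSeries.C (x j) * PowerSeries.X ^ (i : ℕ))
        = (h j i ^ p * PowerSeries.C (x j)) * PowerSeries.X ^ (i : ℕ) by ring,
      PowerSeries.coeff_mul_X_pow', PowerSeries.coeff_mul_C, coeff_pow_char]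
    by_cases him : (i : ℕ) ≤ m
    · rw [if_pos him]
      by_cases hieq : (i : ℕ) = m % p
      · have hdvd : p ∣ m - (i : ℕ) := by
          refine ⟨m / p, ?_⟩
          rw [hieq]
          exact Nat.sub_eq_of_eq_add (Nat.div_add_mod m p).symm
        rw [if_pos hieq, if_pos hdvd]
        congr 2
        rw [hh]
        simp only [PowerSeries.coeff_mk]
        congr 1
        obtain ⟨t, ht⟩ := hdvd
        have h1 : m = p * t + (i : ℕ) := Nat.eq_add_of_sub_eq him ht
        rw [ht, Nat.mul_div_cancel_left _ hp, ← h1]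
      · have hndvd : ¬ p ∣ m - (i : ℕ) := by
          rintro ⟨t, ht⟩
          apply hieq
          have h1 : m = p * t + (i : ℕ) := Nat.eq_add_of_sub_eq him ht
          rw [h1, Nat.mul_add_mod, Nat.mod_eq_of_lt i.isLt]
        rw [if_neg hieq, if_neg hndvd, zero_pow hp.ne', zero_mul]
    · rw [if_neg him,
        if_neg (fun he => him ((he : (i : ℕ) = m % p) ▸ Nat.mod_le m p))]
  rw [map_sum, Fintype.sum_prod_type]
  have step : ∀ j : Fin n, ∑ i : Fin p,
      PowerSeries.coeff m ((fun ji : Fin n × Fin p => h ji.1 ji.2) (j, i) • y (j, i))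
        = c' m j ^ p * x j := by
    intro j
    have hterm : ∀ i : Fin p,
        PowerSeries.coeff m ((fun ji : Fin n × Fin p => h ji.1 ji.2) (j, i) • y (j, i))
          = if (i : ℕ) = m % p then c' m j ^ p * x j else 0 := by
      intro i
      rw [hsmul]
      exact key j i
    rw [Finset.sum_congr rfl fun i _ => hterm i]
    rw [Finset.sum_eq_single (⟨m % p, Nat.mod_lt m hp⟩ : Fin p)]
    · exact if_pos rfl
    · intro b _ hb
      exact if_neg fun hc => hb (Fin.ext hc)
    · intro habs
      exact absurd (Finset.mem_univ _) habs
  rw [Finset.sum_congr rfl fun j _ => step j]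
  exact hc' m
end

section
/- Let R be a Noetherian F_p-algebra which is F-finite. Then the module of Kähler differentials Ω¹_{R[[z]]/R[z]} of the power series ring over the polynomial ring vanishes; equivalently, the natural map R[z] → R[[z]] is formally unramified. -/
open scoped KaehlerDifferential

noncomputable instance polyToPowerSeriesAlgebra (R : Type*) [CommRing R] :
    Algebra (Polynomial R) (PowerSeries R) :=
  (Polynomial.coeToPowerSeries.ringHom : Polynomial R →+* PowerSeries R).toAlgebra

open PowerSeries

section Aux

variable {R : Type*} [CommRing R] (p : ℕ) [Fact p.Prime] [CharP R p]

omit [Fact p.Prime] in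
lemma charP_powerSeries_aux : CharP (PowerSeries R) p :=
  charP_of_injective_ringHom
    (fun a b h => by simpa using congrArg (constantCoeff) h : Function.Injective (C (R := R))) p

/-- The coefficients of a `p`-th power of a power series in characteristic `p`. -/
lemma coeff_pow_char_aux (f : PowerSeries R) (n : ℕ) :
    (coeff n) (f ^ p) = if p ∣ n then (coeff (n / p) f) ^ p else 0 := by
  haveI : CharP (PowerSeries R) p := charP_powerSeries_aux p
  have hp : 0 < p := (Fact.out : p.Prime).pos
  obtain ⟨g, hg⟩ : (X : PowerSeries R) ^ (n + 1) ∣ (f - (f.trunc (n + 1) : PowerSeries R)) := by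
    rw [X_pow_dvd_iff]
    intro m hm
    simp [coeff_trunc, hm]
  have hf : f = (f.trunc (n + 1) : PowerSeries R) + X ^ (n + 1) * g := by
    rw [← hg]; ring
  have hpow : f ^ p = ((f.trunc (n + 1) : Polynomial R) : PowerSeries R) ^ p
      + (X ^ (n + 1) * g) ^ p := by
    conv_lhs => rw [hf]
    exact add_pow_char _ _ _
  have h2 : (coeff n) ((X ^ (n + 1) * g : PowerSeries R) ^ p) = 0 := by
    have hd : (X : PowerSeries R) ^ (n + 1) ∣ (X ^ (n + 1) * g) ^ p :=
      dvd_pow (dvd_mul_right _ g) hp.ne'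
    rw [X_pow_dvd_iff] at hd
    exact hd n (lt_add_one n)
  rw [hpow, map_add, h2, add_zero, ← Polynomial.coe_pow, Polynomial.coeff_coe,
    ← Polynomial.map_frobenius_expand, Polynomial.coeff_map, Polynomial.coeff_expand hp]
  split_ifs with hdvd
  · rw [frobenius_def, coeff_trunc, if_pos (lt_of_le_of_lt (Nat.div_le_self n p)
      (lt_add_one n))]
  · simp [frobenius_def, hp.ne']

/-- Decomposition of a power series using F-finiteness of `R`. -/
lemma exists_decomp_aux (hF : (frobenius R p).Finite) :
    ∃ s : Finset R, ∀ f : PowerSeries R, ∃ h : R → Fin p → PowerSeries R,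
      f = ∑ e ∈ s, ∑ r : Fin p, C e * X ^ (r : ℕ) * (h e r) ^ p := by
  have hp : 0 < p := (Fact.out : p.Prime).pos
  -- extract a finite generating set of `R` over its `p`-th powers
  letI : Algebra R R := (frobenius R p).toAlgebra
  letI : Module R R := Algebra.toModule
  haveI : Module.Finite R R := hF
  obtain ⟨s, hs⟩ := Module.Finite.fg_top (R := R) (M := R)
  have hmem : ∀ a : R, ∃ c : R → R, ∑ i ∈ s, (c i) ^ p * i = a := by
    intro a
    have : a ∈ Submodule.span R (↑s : Set R) := hs ▸ Submodule.mem_top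
    obtain ⟨c, -, hc⟩ := Submodule.mem_span_finset.mp this
    exact ⟨c, by simpa [Algebra.smul_def, RingHom.algebraMap_toAlgebra, frobenius_def] using hc⟩
  choose c hc using hmem
  refine ⟨s, fun f => ?_⟩
  refine ⟨fun e r => PowerSeries.mk fun q => c ((coeff (p * q + (r : ℕ))) f) e, ?_⟩
  ext n
  rw [map_sum]
  have key : ∀ e ∈ s, (coeff n) (∑ r : Fin p,
      C e * X ^ (r : ℕ) * (PowerSeries.mk fun q => c ((coeff (p * q + (r : ℕ))) f) e) ^ p)
      = e * (c ((coeff n) f) e) ^ p := by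
    intro e _
    rw [map_sum]
    have hn : n = p * (n / p) + n % p := (Nat.div_add_mod n p).symm
    rw [Finset.sum_eq_single (⟨n % p, Nat.mod_lt n hp⟩ : Fin p)]
    · rw [mul_assoc, mul_comm (C e), coeff_mul_C, coeff_X_pow_mul',
        if_pos (by simp only [Fin.val_mk]; omega), coeff_pow_char_aux p,
        if_pos ⟨n / p, by simp only [Fin.val_mk]; omega⟩]
      simp only [Fin.val_mk]
      rw [show (n - n % p) / p = n / p by
        rw [show n - n % p = p * (n / p) by omega, Nat.mul_div_cancel_left _ hp]]
      simp only [coeff_mk]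
      rw [← hn, mul_comm]
    · intro r _ hr
      rw [mul_assoc, mul_comm (C e), coeff_mul_C, coeff_X_pow_mul']
      split_ifs with hle
      · rw [coeff_pow_char_aux p, if_neg, zero_mul]
        rintro ⟨q, hq⟩
        apply hr
        have hq' : n = p * q + (r : ℕ) := by omega
        have hlt : (r : ℕ) < p := r.isLt
        have : n % p = (r : ℕ) := by
          rw [hq', Nat.mul_add_mod, Nat.mod_eq_of_lt hlt]
        exact Fin.ext this.symm
      · rw [zero_mul]
    · intro h
      exact absurd (Finset.mem_univ _) h
  refine ((Finset.sum_congr rfl key).trans ?_).symm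
  conv_rhs => rw [← hc ((coeff n) f)]
  exact Finset.sum_congr rfl fun i _ => mul_comm i _

end Aux

/-- Let `R` be a Noetherian `𝔽_p`-algebra which is `F`-finite.  Then the module
of Kähler differentials `Ω¹_{R[[z]]/R[z]}` vanishes; equivalently, the natural map
`R[z] → R[[z]]` is formally unramified. -/
theorem powerSeries_formally_unramified_over_polynomials
    (p : ℕ) [Fact p.Prime] (R : Type*) [CommRing R] [IsNoetherianRing R] [CharP R p]
    (hF : (frobenius R p).Finite) :
    Subsingleton (Ω[PowerSeries R⁄Polynomial R]) ∧
      Algebra.FormallyUnramified (Polynomial R) (PowerSeries R) := by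
  haveI : CharP (PowerSeries R) p := charP_powerSeries_aux p
  set S := PowerSeries R
  set A := Polynomial R
  set D := KaehlerDifferential.D A S with hD
  -- the algebra map is the coercion
  have halg : ∀ φ : A, algebraMap A S φ = (φ : PowerSeries R) := fun _ => rfl
  have hDcoe : ∀ φ : A, D (φ : PowerSeries R) = 0 := fun φ => by
    rw [← halg, Derivation.map_algebraMap]
  have hDXpow : ∀ n : ℕ, D ((X : S) ^ n) = 0 := fun n => by
    have : ((X : S) ^ n) = ((Polynomial.X ^ n : A) : PowerSeries R) := by
      rw [Polynomial.coe_pow, Polynomial.coe_X]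
    rw [this, hDcoe]
  -- every `D f` is `X • D g` for some `g`
  have hXsmul : ∀ f : S, ∃ g : S, D f = (X : S) • D g := by
    intro f
    obtain ⟨g, hg⟩ : (X : S) ^ 1 ∣ (f - (f.trunc 1 : PowerSeries R)) := by
      rw [X_pow_dvd_iff]
      intro m hm
      simp [coeff_trunc, Nat.lt_one_iff.mp hm, coeff_C]
    refine ⟨g, ?_⟩
    have hf : f = (f.trunc 1 : PowerSeries R) + X ^ 1 * g := by rw [← hg]; ring
    rw [hf, Derivation.map_add, hDcoe, zero_add, Derivation.leibniz, hDXpow, smul_zero,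
      add_zero, pow_one]
  -- `D (h ^ p) = 0`
  have hDpow : ∀ h : S, D (h ^ p) = 0 := fun h => by
    rw [Derivation.leibniz_pow, ← Nat.cast_smul_eq_nsmul S p, CharP.cast_eq_zero S p,
      zero_smul]
  -- the span of the generators from F-finiteness
  obtain ⟨s, hdec⟩ := exists_decomp_aux p hF
  set N : Submodule S (Ω[S⁄A]) :=
    Submodule.span S (Set.range fun er : s × Fin p => D (C (er.1 : R) * X ^ ((er.2 : ℕ)))) with hN
  have hDf_mem : ∀ f : S, D f ∈ N := by
    intro f
    obtain ⟨h, hh⟩ := hdec f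
    rw [hh, map_sum]
    refine Submodule.sum_mem _ fun e he => ?_
    rw [map_sum]
    refine Submodule.sum_mem _ fun r _ => ?_
    rw [Derivation.leibniz, hDpow, smul_zero, zero_add]
    exact Submodule.smul_mem _ _ (Submodule.subset_span ⟨(⟨e, he⟩, r), rfl⟩)
  have htop : (⊤ : Submodule S (Ω[S⁄A])) ≤ N := by
    rw [← KaehlerDifferential.span_range_derivation]
    rw [Submodule.span_le]
    rintro _ ⟨f, rfl⟩
    exact hDf_mem f
  have hNtop : N = ⊤ := top_le_iff.mp htop
  have hfg : (⊤ : Submodule S (Ω[S⁄A])).FG :=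
    hNtop ▸ Submodule.fg_span (Set.finite_range _)
  -- ⊤ ≤ (X) • ⊤
  have hle : (⊤ : Submodule S (Ω[S⁄A])) ≤ (Ideal.span {(X : S)}) • ⊤ := by
    conv_lhs => rw [← KaehlerDifferential.span_range_derivation]
    rw [Submodule.span_le]
    rintro _ ⟨f, rfl⟩
    obtain ⟨g, hg⟩ := hXsmul f
    rw [hg]
    exact Submodule.smul_mem_smul (Ideal.mem_span_singleton_self _) Submodule.mem_top
  obtain ⟨r, hrI, hr⟩ := Submodule.exists_mem_and_smul_eq_self_of_fg_of_le_smul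
    (Ideal.span {(X : S)}) ⊤ hfg hle
  have hzero : ∀ x : Ω[S⁄A], x = 0 := by
    intro x
    have hrx : (1 - r) • x = 0 := by
      rw [sub_smul, one_smul, hr x Submodule.mem_top, sub_self]
    have hunit : IsUnit (1 - r) := by
      rw [PowerSeries.isUnit_iff_constantCoeff, map_sub, map_one]
      obtain ⟨t, rfl⟩ := Ideal.mem_span_singleton.mp hrI
      rw [show constantCoeff ((X : S) * t) = 0 by
        have : (X : S) ∣ X * t := dvd_mul_right _ _
        exact X_dvd_iff.mp this]
      simp
    obtain ⟨u, hu⟩ := hunit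
    calc x = ((↑u⁻¹ * ↑u : S)) • x := by rw [Units.inv_mul, one_smul]
    _ = (↑u⁻¹ : S) • ((↑u : S) • x) := by rw [mul_smul]
    _ = (↑u⁻¹ : S) • ((1 - r) • x) := by rw [hu]
    _ = 0 := by rw [hrx, smul_zero]
  have hsub : Subsingleton (Ω[S⁄A]) :=
    subsingleton_of_forall_eq 0 fun x => hzero x
  exact ⟨hsub, ⟨hsub⟩⟩
end
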